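/- Let q be a prime power, and let v and m be integers with v ≥ 2 and m ≥ 2, and let δ ≥ 0 be an integer. Then T_q(vm+δ, vm−v+1+δ, m) = (q^{vm}−1)/(q^m−1). -/

import Mathlib

set_option linter.unusedSectionVars false

open Module Finset

section Counting

variable {F : Type} [Field F] [Fintype F]
variable {V : Type} [AddCommGroup V] [Module F V] [FiniteDimensional F V]

/-- scalar multiple lemma for functionals with equal kernels -/
lemma eq_smul_of_ker_eq (f g : Module.Dual F V) (hf : f ≠ 0)
    (hker : LinearMap.ker f = LinearMap.ker g) : ∃ c : F, c ≠ 0 ∧ g = c • f := by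
  obtain ⟨x, hx⟩ : ∃ x, f x ≠ 0 := by
    by_contra h
    push_neg at h
    exact hf (by ext y; simp [h y])
  have hgx : g x ≠ 0 := by
    intro h
    have : x ∈ LinearMap.ker f := hker ▸ (LinearMap.mem_ker.2 h)
    exact hx this
  refine ⟨g x / f x, div_ne_zero hgx hx, ?_⟩
  ext y
  have hz : y - (f y / f x) • x ∈ LinearMap.ker f := by
    simp [LinearMap.mem_ker, map_sub, map_smul, div_mul_cancel₀ _ hx]
  rw [hker] at hz
  have hz' : g (y - (f y / f x) • x) = 0 := hz
  rw [map_sub, map_smul, sub_eq_zero] at hz'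
  simp only [LinearMap.smul_apply, smul_eq_mul]
  rw [hz']
  field_simp
  rw [smul_eq_mul, ← mul_assoc, show f x * (f y / f x) = f y by field_simp]

lemma exists_ker_eq (H : Submodule F V) (h : finrank F ↥H + 1 = finrank F V) :
    ∃ f : Module.Dual F V, f ≠ 0 ∧ LinearMap.ker f = H := by
  have hq : finrank F (V ⧸ H) = 1 := by
    have := Submodule.finrank_quotient_add_finrank H
    omega
  have : Nonempty ((V ⧸ H) ≃ₗ[F] F) :=
    FiniteDimensional.nonempty_linearEquiv_of_finrank_eq (by rw [hq, finrank_self])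
  obtain ⟨e⟩ := this
  refine ⟨e.toLinearMap.comp H.mkQ, ?_, ?_⟩
  · intro h0
    have hHtop : H = ⊤ := by
      have : LinearMap.ker (e.toLinearMap.comp H.mkQ) = ⊤ := by rw [h0]; exact LinearMap.ker_zero
      rwa [LinearMap.ker_comp, LinearEquiv.ker, Submodule.comap_bot, Submodule.ker_mkQ] at this
    rw [hHtop, finrank_top] at h
    omega
  · rw [LinearMap.ker_comp, LinearEquiv.ker, Submodule.comap_bot, Submodule.ker_mkQ]

lemma ker_finrank_of_ne_zero (f : Module.Dual F V) (hf : f ≠ 0) :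
    finrank F ↥(LinearMap.ker f) + 1 = finrank F V := by
  have h1 : finrank F ↥(LinearMap.range f) = 1 := by
    have hle : finrank F ↥(LinearMap.range f) ≤ 1 := by
      have := Submodule.finrank_le (LinearMap.range f)
      rwa [finrank_self] at this
    have hne : LinearMap.range f ≠ ⊥ := by
      intro h
      apply hf
      rw [← LinearMap.range_eq_bot]
      exact h
    have hpos : 0 < finrank F ↥(LinearMap.range f) := by
      rcases Submodule.ne_bot_iff _ |>.1 hne with ⟨x, hx, hx0⟩
      exact Module.finrank_pos_iff_exists_ne_zero.2 ⟨⟨x, hx⟩, by simpa using hx0⟩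
    omega
  have := LinearMap.finrank_range_add_finrank_ker f
  omega

end Counting

section Count2
variable {F : Type} [Field F] [Fintype F]
variable {V : Type} [AddCommGroup V] [Module F V] [FiniteDimensional F V]

open scoped Classical in
lemma count_hyperplanes [Fintype V] [Fintype (Submodule F V)] (U : Submodule F V)
    (hU : finrank F ↥U < finrank F V) :
    ((Finset.univ : Finset (Submodule F V)).filter
        (fun (H : Submodule F V) => finrank F ↥H + 1 = finrank F V ∧ U ≤ H)).card * (Fintype.card F - 1)
      = Fintype.card F ^ (finrank F V - finrank F ↥U) - 1 := by
  haveI : Finite (Module.Dual F V) :=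
    Finite.of_injective (fun f => (f : V → F)) DFunLike.coe_injective
  haveI : Fintype (Module.Dual F V) := Fintype.ofFinite _
  set n := finrank F V with hn
  set q := Fintype.card F with hq
  set ann := U.dualAnnihilator with hann
  set HS := ((Finset.univ : Finset (Submodule F V)).filter
        (fun (H : Submodule F V) => finrank F ↥H + 1 = n ∧ U ≤ H)) with hHS
  set T : Finset (Module.Dual F V) :=
    Finset.univ.filter (fun f => f ∈ ann ∧ f ≠ 0) with hT
  -- card of T
  have hrank_ann : finrank F ↥ann = n - finrank F ↥U := by
    have e := LinearEquiv.finrank_eq (R := F) (M := V ⧸ U)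
      (N := ↥U.dualAnnihilator) (Subspace.quotEquivAnnihilator U)
    have h2 := Submodule.finrank_quotient_add_finrank U
    have h3 := Submodule.finrank_le U
    rw [hann, ← e]
    omega
  have hTcard : T.card = q ^ (n - finrank F ↥U) - 1 := by
    have h1 : T = (Finset.univ.filter (fun f => f ∈ ann)).erase 0 := by
      ext g
      simp only [hT, Finset.mem_filter, Finset.mem_erase, Finset.mem_univ, true_and]
      tauto
    have h2 : (Finset.univ.filter (fun f => f ∈ ann)).card = Fintype.card ↥ann := by
      rw [Fintype.card_subtype]
    have h0 : (0 : Module.Dual F V) ∈ Finset.univ.filter (fun f => f ∈ ann) := by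
      simp [ann.zero_mem]
    rw [h1, Finset.card_erase_of_mem h0, h2, card_eq_pow_finrank (K := F), hrank_ann]
  -- fiberwise count
  have hmap : ∀ f ∈ T, LinearMap.ker f ∈ HS := by
    intro f hf
    simp only [hT, Finset.mem_filter, Finset.mem_univ, true_and] at hf
    obtain ⟨hfann, hf0⟩ := hf
    simp only [hHS, Finset.mem_filter, Finset.mem_univ, true_and]
    refine ⟨ker_finrank_of_ne_zero f hf0, ?_⟩
    intro u hu
    exact LinearMap.mem_ker.2 ((Submodule.mem_dualAnnihilator f).1 hfann u hu)
  have hfiber : ∀ H ∈ HS, (T.filter (fun f => LinearMap.ker f = H)).card = q - 1 := by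
    intro H hH
    simp only [hHS, Finset.mem_filter, Finset.mem_univ, true_and] at hH
    obtain ⟨hHrank, hUH⟩ := hH
    obtain ⟨f0, hf00, hf0ker⟩ := exists_ker_eq H hHrank
    have hf0ann : f0 ∈ ann := by
      rw [Submodule.mem_dualAnnihilator]
      intro w hw
      exact LinearMap.mem_ker.1 (hf0ker ▸ hUH hw)
    have himg : T.filter (fun f => LinearMap.ker f = H)
        = (Finset.univ.filter (fun c : F => c ≠ 0)).image (fun c => c • f0) := by
      ext g
      simp only [Finset.mem_image, Finset.mem_filter, Finset.mem_univ, true_and, hT]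
      constructor
      · rintro ⟨⟨hgann, hg0⟩, hgker⟩
        obtain ⟨c, hc0, hgc⟩ := eq_smul_of_ker_eq f0 g hf00 (by rw [hf0ker, hgker])
        exact ⟨c, hc0, hgc.symm⟩
      · rintro ⟨c, hc0, rfl⟩
        refine ⟨⟨ann.smul_mem c hf0ann, ?_⟩, ?_⟩
        · simpa using smul_ne_zero hc0 hf00
        · rw [LinearMap.ker_smul _ _ hc0, hf0ker]
    rw [himg, Finset.card_image_of_injective _ (smul_left_injective F hf00),
      Finset.filter_ne', Finset.card_erase_of_mem (Finset.mem_univ _), Finset.card_univ]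
  have hcount := Finset.card_eq_sum_card_fiberwise hmap
  rw [hcount, Finset.sum_congr rfl hfiber, Finset.sum_const, smul_eq_mul] at hTcard
  rw [← hTcard]
end Count2

section Arith

lemma geom_nat (x : ℕ) (hx : 1 ≤ x) (v : ℕ) :
    (x - 1) * ∑ i ∈ Finset.range v, x ^ i = x ^ v - 1 := by
  induction v with
  | zero => simp
  | succ n ih =>
    rw [Finset.sum_range_succ, Nat.mul_add, ih, Nat.sub_mul, one_mul]
    have h1 : 1 ≤ x ^ n := Nat.one_le_pow _ _ hx
    have h2 : x ^ n ≤ x ^ (n+1) := Nat.pow_le_pow_right hx (by omega)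
    have h3 : x ^ (n+1) = x * x ^ n := by ring
    have h4 : x * x ^ n = x ^ n * x := by ring
    omega

end Arith

section InfRank
variable {F : Type} [Field F]
variable {V : Type} [AddCommGroup V] [Module F V] [FiniteDimensional F V]

lemma finrank_finset_inf {ι : Type} [DecidableEq ι] (s : Finset ι) (f : ι → Submodule F V) (d : ℕ)
    (h : ∀ i ∈ s, finrank F V ≤ finrank F ↥(f i) + d) :
    finrank F V ≤ finrank F ↥(s.inf f) + s.card * d := by
  induction s using Finset.induction_on with
  | empty => rw [Finset.inf_empty]; simp [finrank_top]
  | @insert a s ha ih =>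
    rw [Finset.inf_insert]
    have h1 := Submodule.finrank_sup_add_finrank_inf_eq (f a) (s.inf f)
    have h2 := Submodule.finrank_le (f a ⊔ s.inf f)
    have h3 := ih (fun i hi => h i (Finset.mem_insert_of_mem hi))
    have h4 := h a (Finset.mem_insert_self a s)
    rw [Finset.card_insert_of_notMem ha]
    have h5 : (s.card + 1) * d = s.card * d + d := by ring
    omega

end InfRank

section Lower
variable {F : Type} [Field F] [Fintype F]

lemma design_lower_bound (m : ℕ) (hm : 1 ≤ m) :
    ∀ (c : ℕ) (V : Type) [AddCommGroup V] [Module F V] [FiniteDimensional F V],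
    m + c ≤ finrank F V →
    ∀ C : Finset (Submodule F V), (∀ U ∈ C, finrank F ↥U = m) →
    (∀ W : Submodule F V, finrank F ↥W + c = finrank F V → ∃ U ∈ C, U ≤ W) →
    ∑ i ∈ Finset.range (c+1), (Fintype.card F)^(m*i) ≤ C.card := by
  intro c
  induction c with
  | zero =>
    intro V _ _ _ hdim C hC hcov
    obtain ⟨U, hU, -⟩ := hcov ⊤ (by simp [finrank_top])
    simpa using Finset.card_pos.2 ⟨U, hU⟩
  | succ c ih =>
    intro V _ _ _ hdim C hC hcov
    classical
    haveI : Finite V := Module.finite_of_finite F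
    haveI : Fintype V := Fintype.ofFinite V
    haveI : Finite (Submodule F V) :=
      Finite.of_injective (fun p : Submodule F V => (p : Set V)) SetLike.coe_injective
    haveI : Fintype (Submodule F V) := Fintype.ofFinite _
    set q := Fintype.card F with hq
    set n := finrank F V with hn
    have hq2 : 2 ≤ q := Fintype.one_lt_card
    set Nc := ∑ i ∈ Finset.range (c+1), q^(m*i) with hNc
    have hNc1 : 1 ≤ Nc := by
      rw [hNc]
      calc 1 = q^(m*0) := by simp
      _ ≤ _ := Finset.single_le_sum (f := fun i => q^(m*i))
          (fun i _ => Nat.zero_le _) (Finset.mem_range.2 (by omega))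
    -- bound for each hyperplane
    have hyp_bound : ∀ H : Submodule F V, finrank F ↥H + 1 = n →
        Nc ≤ (C.filter (fun U => U ≤ H)).card := by
      intro H hH
      set CH := C.filter (fun U => U ≤ H) with hCH
      set D : Finset (Submodule F ↥H) := CH.image (Submodule.comap H.subtype) with hD
      have hrank : ∀ U' ∈ D, finrank F ↥U' = m := by
        intro U' hU'
        simp only [hD, Finset.mem_image] at hU'
        obtain ⟨U, hU, rfl⟩ := hU'
        simp only [hCH, Finset.mem_filter] at hU
        rw [(Submodule.comapSubtypeEquivOfLe hU.2).finrank_eq]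
        exact hC U hU.1
      have hcov' : ∀ W' : Submodule F ↥H, finrank F ↥W' + c = finrank F ↥H →
          ∃ U' ∈ D, U' ≤ W' := by
        intro W' hW'
        have hWr : finrank F ↥(Submodule.map H.subtype W') = finrank F ↥W' :=
          ((Submodule.equivMapOfInjective H.subtype (Submodule.injective_subtype H)
            W').finrank_eq).symm
        obtain ⟨U, hU, hUle⟩ := hcov (Submodule.map H.subtype W') (by rw [hWr]; omega)
        have hUH : U ≤ H := le_trans hUle (Submodule.map_subtype_le H W')
        refine ⟨Submodule.comap H.subtype U,
          Finset.mem_image_of_mem _ (by simp only [hCH, Finset.mem_filter]; exact ⟨hU, hUH⟩), ?_⟩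
        intro x hx
        have hx' : (x : V) ∈ Submodule.map H.subtype W' := hUle hx
        obtain ⟨y, hy, hxy⟩ := hx'
        have hyx : y = x := Subtype.ext hxy
        rwa [← hyx]
      have hdimH : m + c ≤ finrank F ↥H := by omega
      calc Nc ≤ D.card := ih ↥H hdimH D hrank hcov'
      _ ≤ CH.card := Finset.card_image_le
    -- the set of hyperplanes
    set HS := Finset.univ.filter (fun (H : Submodule F V) => finrank F ↥H + 1 = n) with hHS
    have hsum1 : HS.card * Nc ≤ ∑ H ∈ HS, (C.filter (fun U => U ≤ H)).card := by
      calc HS.card * Nc = ∑ _H ∈ HS, Nc := by rw [Finset.sum_const, smul_eq_mul]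
      _ ≤ _ := Finset.sum_le_sum (fun H hH => by
          simp only [hHS, Finset.mem_filter] at hH
          exact hyp_bound H hH.2)
    have hswap : ∑ H ∈ HS, (C.filter (fun U => U ≤ H)).card
        = ∑ U ∈ C, ((Finset.univ : Finset (Submodule F V)).filter
            (fun (H : Submodule F V) => finrank F ↥H + 1 = n ∧ U ≤ H)).card := by
      simp only [Finset.card_filter]
      rw [Finset.sum_comm]
      apply Finset.sum_congr rfl
      intro U _
      rw [hHS, Finset.sum_filter]
      apply Finset.sum_congr rfl
      intro H _
      by_cases h1 : finrank F ↥H + 1 = n <;> by_cases h2 : U ≤ H <;> simp [h1, h2]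
    -- counting values
    have hmn : m + c + 1 ≤ n := by omega
    have hcountU : ∀ U ∈ C, ((Finset.univ : Finset (Submodule F V)).filter
        (fun (H : Submodule F V) => finrank F ↥H + 1 = n ∧ U ≤ H)).card * (q-1)
        = q^(n-m) - 1 := by
      intro U hU
      have h1 := count_hyperplanes (F := F) (V := V) U (by rw [hC U hU, ← hn]; omega)
      rw [← hn] at h1
      rw [hC U hU] at h1
      exact h1
    have hcountAll : HS.card * (q-1) = q^n - 1 := by
      have h1 := count_hyperplanes (F := F) (V := V) ⊥ (by rw [finrank_bot, ← hn]; omega)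
      rw [← hn, finrank_bot] at h1
      have h2 : ((Finset.univ : Finset (Submodule F V)).filter
          (fun (H : Submodule F V) => finrank F ↥H + 1 = n ∧ ⊥ ≤ H)) = HS := by
        apply Finset.filter_congr
        intro H _
        simp [bot_le]
      rw [h2] at h1
      simpa using h1
    -- put together
    have hkey : (q^n - 1) * Nc ≤ C.card * (q^(n-m) - 1) := by
      have h3 : (HS.card * Nc) * (q-1) ≤
          (∑ U ∈ C, ((Finset.univ : Finset (Submodule F V)).filter
            (fun (H : Submodule F V) => finrank F ↥H + 1 = n ∧ U ≤ H)).card) * (q-1) :=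
        Nat.mul_le_mul_right _ (hswap ▸ hsum1)
      rw [Finset.sum_mul] at h3
      rw [Finset.sum_congr rfl hcountU] at h3
      rw [Finset.sum_const, smul_eq_mul] at h3
      calc (q^n - 1) * Nc = (HS.card * (q-1)) * Nc := by rw [hcountAll]
      _ = (HS.card * Nc) * (q-1) := by ring
      _ ≤ C.card * (q^(n-m) - 1) := h3
    -- conclude
    by_contra hcon
    push_neg at hcon
    have hsum2 : ∑ i ∈ Finset.range (c+1+1), q^(m*i) = Nc * q^m + 1 := by
      rw [Finset.sum_range_succ']
      have : ∀ i, q^(m*(i+1)) = q^(m*i) * q^m := by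
        intro i
        rw [Nat.mul_succ, pow_add]
      simp only [this, Nat.mul_zero, pow_zero]
      rw [← Finset.sum_mul, ← hNc]
    rw [hsum2] at hcon
    have hCle : C.card ≤ Nc * q^m := by omega
    set Z := q^m with hZ
    set Y := q^(n-m) with hY
    set X := q^n with hX
    have hZY : Z * Y = X := by rw [hZ, hY, hX, ← pow_add]; congr 1; omega
    have hZ2 : 2 ≤ Z := by
      calc 2 ≤ q := hq2
      _ = q^1 := (pow_one q).symm
      _ ≤ q^m := Nat.pow_le_pow_right (by omega) hm
    have hY1 : 1 ≤ Y := Nat.one_le_pow _ _ (by omega)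
    have hchain : (X - 1) * Nc ≤ Nc * Z * (Y - 1) := by
      calc (X - 1) * Nc ≤ C.card * (Y - 1) := hkey
      _ ≤ (Nc * Z) * (Y-1) := Nat.mul_le_mul_right _ hCle
    set B := Z * (Y - 1) with hB
    have e1 : B + Z = X := by
      rw [hB]
      calc Z * (Y-1) + Z = Z * ((Y-1)+1) := by ring
      _ = Z * Y := by congr 1; omega
      _ = X := hZY
    have e2 : (X - 1) * Nc = B * Nc + (Z-1) * Nc := by
      have : X - 1 = B + (Z - 1) := by omega
      rw [this, Nat.add_mul]
    have e3 : Nc * Z * (Y-1) = B * Nc := by rw [hB]; ring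
    have e4 : 1 ≤ (Z-1) * Nc := Nat.mul_pos (by omega) hNc1
    omega

end Lower

open Module Polynomial

section ExtField

variable (F : Type) [Field F] [Fintype F]

/-- A degree-`m` extension field of the finite field `F`. -/
noncomputable def ExtField (m : ℕ) : Type :=
  Polynomial.SplittingField (X ^ (Fintype.card F ^ m) - X : F[X])

noncomputable instance (m : ℕ) : Field (ExtField F m) :=
  inferInstanceAs (Field (Polynomial.SplittingField _))

noncomputable instance (m : ℕ) : Algebra F (ExtField F m) :=
  inferInstanceAs (Algebra F (Polynomial.SplittingField _))

instance (m : ℕ) : FiniteDimensional F (ExtField F m) :=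
  inferInstanceAs (FiniteDimensional F (Polynomial.SplittingField _))

instance (m : ℕ) : Finite (ExtField F m) := Module.finite_of_finite F

theorem ExtField.finrank_eq (m : ℕ) (hm : m ≠ 0) : finrank F (ExtField F m) = m := by
  classical
  haveI : Fintype (ExtField F m) := Fintype.ofFinite _
  set q := Fintype.card F with hq
  have hq1 : 1 < q := Fintype.one_lt_card
  set K := ExtField F m with hK
  set g : F[X] := X ^ (q ^ m) - X with hg
  have hsplit : Splits (g.map (algebraMap F K)) := SplittingField.splits g
  have hadjoin : Algebra.adjoin F (g.rootSet K) = ⊤ := SplittingField.adjoin_rootSet g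
  -- characteristic
  set p := ringChar F with hp
  obtain ⟨n, hpprime, hcard⟩ := FiniteField.card F p
  haveI : CharP K p := charP_of_injective_algebraMap (algebraMap F K).injective p
  haveI : Fact (Nat.Prime p) := ⟨hpprime⟩
  have hqm : q ^ m = p ^ ((n : ℕ) * m) := by rw [hq, hcard, ← pow_mul]
  have hnm0 : (n : ℕ) * m ≠ 0 := by
    have := n.pos
    positivity
  have hsep : g.Separable := by
    rw [hg, hqm]
    exact galois_poly_separable p _ (dvd_pow_self p hnm0)
  have hg0 : g ≠ 0 := FiniteField.X_pow_card_pow_sub_X_ne_zero F hm hq1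
  have hdeg : g.natDegree = q ^ m := FiniteField.X_pow_card_pow_sub_X_natDegree_eq F hm hq1
  have key : Fintype.card (g.rootSet K) = q ^ m := by
    rw [card_rootSet_eq_natDegree hsep hsplit, hdeg]
  -- every element of K is a root
  have huniv : g.rootSet K = Set.univ := by
    rw [Set.eq_univ_iff_forall]
    suffices h : ∀ (x : K), x ∈ (⊤ : Subalgebra F K) → x ∈ g.rootSet K by
      intro x; exact h x trivial
    rw [← hadjoin]
    intro x hx
    rw [Algebra.mem_adjoin_iff] at hx
    induction hx using Subring.closure_induction with
    | mem y hy =>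
      rcases hy with hy | hy
      · obtain ⟨a, rfl⟩ := hy
        rw [mem_rootSet_of_ne hg0]
        simp only [hg, map_sub, map_pow, aeval_X]
        rw [← map_pow, FiniteField.pow_card_pow, sub_self]
      · exact hy
    | zero =>
      rw [mem_rootSet_of_ne hg0]
      simp only [hg, map_sub, map_pow, aeval_X]
      rw [zero_pow (by positivity), sub_self]
    | one =>
      rw [mem_rootSet_of_ne hg0]
      simp only [hg, map_sub, map_pow, aeval_X]
      rw [one_pow, sub_self]
    | add x y _ _ hx hy =>
      rw [mem_rootSet_of_ne hg0] at hx hy ⊢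
      simp only [hg, map_sub, map_pow, aeval_X, sub_eq_zero] at hx hy ⊢
      rw [hqm] at hx hy ⊢
      rw [add_pow_char_pow, hx, hy]
    | neg x _ hx =>
      rw [mem_rootSet_of_ne hg0] at hx ⊢
      simp only [hg, map_sub, map_pow, aeval_X, sub_eq_zero] at hx ⊢
      rw [hqm] at hx ⊢
      rw [neg_pow, hx, neg_one_pow_char_pow]
      ring
    | mul x y _ _ hx hy =>
      rw [mem_rootSet_of_ne hg0] at hx hy ⊢
      simp only [hg, map_sub, map_pow, aeval_X, sub_eq_zero] at hx hy ⊢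
      rw [mul_pow, hx, hy]
  -- count
  have hcardK : Fintype.card K = q ^ m := by
    rw [← key]
    exact (Fintype.card_congr ((Equiv.setCongr huniv).trans (Equiv.Set.univ K))).symm
  have := card_eq_pow_finrank (K := F) (V := K)
  rw [hcardK, ← hq] at this
  exact (Nat.pow_right_injective hq1 this.symm)

end ExtField

section Spread
variable {F : Type} [Field F] [Fintype F]
variable {K : Type} [Field K] [Algebra F K] [FiniteDimensional F K]

/-- scalar multiplication by `c : K` as an `F`-linear endomorphism of `Fin v → K` -/
noncomputable def smulMap (v : ℕ) (c : K) : (Fin v → K) →ₗ[F] (Fin v → K) where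
  toFun x := c • x
  map_add' := smul_add c
  map_smul' a x := (smul_comm c a x)

lemma smulMap_apply (v : ℕ) (c : K) (x : Fin v → K) : smulMap (F := F) v c x = c • x := rfl

noncomputable def smulEquiv (v : ℕ) (c : K) (hc : c ≠ 0) : (Fin v → K) ≃ₗ[F] (Fin v → K) :=
  { smulMap (F := F) v c with
    invFun := fun x => c⁻¹ • x
    left_inv := fun x => inv_smul_smul₀ hc x
    right_inv := fun x => smul_inv_smul₀ hc x }

lemma contains_line (v : ℕ) (hv : 1 ≤ v) (U : Submodule F (Fin v → K))
    (hU : v * finrank F K + 1 ≤ finrank F ↥U + v) :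
    ∃ x : Fin v → K, x ≠ 0 ∧ (Submodule.span K {x}).restrictScalars F ≤ U := by
  classical
  set m := finrank F K with hm
  have hm1 : 1 ≤ m := Module.finrank_pos
  set b := Module.finBasis F K with hb
  set f : Fin m → Submodule F (Fin v → K) := fun i => U.comap (smulMap v (b i)) with hf
  have hrank_f : ∀ i, finrank F ↥(f i) = finrank F ↥U := by
    intro i
    have hbne : (b i) ≠ 0 := b.ne_zero i
    have hcomap : f i = Submodule.map ((smulEquiv (F := F) v (b i) hbne).symm : (Fin v → K) →ₗ[F] (Fin v → K)) U := by
      rw [hf]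
      exact Submodule.comap_equiv_eq_map_symm (smulEquiv (F := F) v (b i) hbne) U
    rw [hcomap]
    exact LinearEquiv.finrank_map_eq _ _
  have hVm : finrank F (Fin v → K) = v * m := by
    rw [Module.finrank_pi_fintype]
    simp [Finset.sum_const, Finset.card_univ, mul_comm, hm]
  have hWrank := finrank_finset_inf (Finset.univ : Finset (Fin m)) f (v - 1)
    (fun i _ => by rw [hrank_f i, hVm]; omega)
  rw [Finset.card_univ, Fintype.card_fin, hVm] at hWrank
  have hmv : m * (v - 1) + m = v * m := by
    obtain ⟨v', rfl⟩ : ∃ v', v = v' + 1 := ⟨v - 1, by omega⟩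
    simp only [Nat.add_sub_cancel]
    ring
  have hWpos : 1 ≤ finrank F ↥(Finset.univ.inf f) := by omega
  have hWne : (Finset.univ.inf f) ≠ ⊥ := by
    intro h
    rw [h, finrank_bot] at hWpos
    omega
  obtain ⟨x, hxW, hx0⟩ := (Submodule.ne_bot_iff (Finset.univ.inf f)).1 hWne
  refine ⟨x, hx0, ?_⟩
  intro y hy
  have hy' : y ∈ Submodule.span K {x} := hy
  obtain ⟨c, rfl⟩ := Submodule.mem_span_singleton.1 hy'
  have hxi : ∀ i : Fin m, (b i) • x ∈ U := by
    intro i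
    have hxf : x ∈ f i := (Finset.inf_le (Finset.mem_univ i) : Finset.univ.inf f ≤ f i) hxW
    exact hxf
  have hcx : c • x = ∑ i : Fin m, (b.repr c i) • ((b i) • x) := by
    conv_lhs => rw [← Basis.sum_repr b c]
    rw [Finset.sum_smul]
    apply Finset.sum_congr rfl
    intro i _
    rw [smul_assoc]
  rw [hcx]
  exact Submodule.sum_mem _ (fun i _ => U.smul_mem _ (hxi i))

end Spread

section SpreadCount
variable {F : Type} [Field F] [Fintype F]
variable {K : Type} [Field K] [Fintype K] [Algebra F K] [FiniteDimensional F K]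

open scoped Classical in
/-- the Desarguesian spread of `Fin v → K`, as `F`-subspaces -/
noncomputable def spread (v : ℕ) : Finset (Submodule F (Fin v → K)) :=
  (Finset.univ.filter (fun x : Fin v → K => x ≠ 0)).image
    (fun x => (Submodule.span K {x}).restrictScalars F)

lemma line_finrank (v : ℕ) (x : Fin v → K) (hx : x ≠ 0) :
    finrank F ↥((Submodule.span K {x}).restrictScalars F) = finrank F K := by
  have h1 : finrank F ↥((Submodule.span K {x}).restrictScalars F)
      = finrank F ↥(Submodule.span K {x}) :=
    LinearEquiv.finrank_eq
      ((Submodule.restrictScalarsEquiv F K (Fin v → K) (Submodule.span K {x})).restrictScalars F)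
  rw [h1, ← finrank_mul_finrank F K ↥(Submodule.span K {x}), finrank_span_singleton hx, mul_one]

lemma spread_finrank (v : ℕ) (P : Submodule F (Fin v → K)) (hP : P ∈ spread v) :
    finrank F ↥P = finrank F K := by
  classical
  simp only [spread, Finset.mem_image, Finset.mem_filter, Finset.mem_univ, true_and] at hP
  obtain ⟨x, hx, rfl⟩ := hP
  exact line_finrank v x hx

lemma mem_spread (v : ℕ) (x : Fin v → K) (hx : x ≠ 0) :
    (Submodule.span K {x}).restrictScalars F ∈ spread (F := F) v := by
  classical
  simp only [spread, Finset.mem_image, Finset.mem_filter, Finset.mem_univ, true_and]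
  exact ⟨x, hx, rfl⟩

lemma spread_card_le (v : ℕ) :
    (spread (F := F) (K := K) v).card ≤ ∑ i ∈ Finset.range v, (Fintype.card K) ^ i := by
  classical
  set Q := Fintype.card K with hQ
  have hQ2 : 2 ≤ Q := Fintype.one_lt_card
  set T := Finset.univ.filter (fun x : Fin v → K => x ≠ 0) with hT
  set g : (Fin v → K) → Submodule F (Fin v → K) :=
    fun x => (Submodule.span K {x}).restrictScalars F with hg
  have hTcard : T.card = Q^v - 1 := by
    rw [hT, Finset.filter_ne', Finset.card_erase_of_mem (Finset.mem_univ _), Finset.card_univ]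
    congr 1
    rw [Fintype.card_fun, Fintype.card_fin]
  have hmap : ∀ x ∈ T, g x ∈ spread (F := F) (K := K) v := by
    intro x hx
    simp only [hT, Finset.mem_filter, Finset.mem_univ, true_and] at hx
    exact mem_spread v x hx
  have hfiber : ∀ P ∈ spread (F := F) (K := K) v, Q - 1 ≤ (T.filter (fun x => g x = P)).card := by
    intro P hP
    simp only [spread, Finset.mem_image, Finset.mem_filter, Finset.mem_univ, true_and] at hP
    obtain ⟨x0, hx00, rfl⟩ := hP
    have hsub : (Finset.univ.filter (fun y : Fin v → K => y ∈ Submodule.span K {x0} ∧ y ≠ 0))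
        ⊆ T.filter (fun x => g x = (Submodule.span K {x0}).restrictScalars F) := by
      intro y hy
      simp only [Finset.mem_filter, Finset.mem_univ, true_and] at hy ⊢
      obtain ⟨hy1, hy2⟩ := hy
      obtain ⟨c, rfl⟩ := Submodule.mem_span_singleton.1 hy1
      have hc0 : c ≠ 0 := by
        rintro rfl
        simp at hy2
      refine ⟨by simp [hT, hy2], ?_⟩
      simp only [hg]
      congr 1
      exact Submodule.span_singleton_smul_eq (IsUnit.mk0 c hc0) x0
    have hEcard : (Finset.univ.filter
        (fun y : Fin v → K => y ∈ Submodule.span K {x0} ∧ y ≠ 0)).card = Q - 1 := by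
      have h1 : (Finset.univ.filter (fun y : Fin v → K => y ∈ Submodule.span K {x0} ∧ y ≠ 0))
          = (Finset.univ.filter (fun y : Fin v → K => y ∈ Submodule.span K {x0})).erase 0 := by
        ext y
        simp only [Finset.mem_filter, Finset.mem_erase, Finset.mem_univ, true_and]
        tauto
      rw [h1, Finset.card_erase_of_mem (by simp [Submodule.zero_mem])]
      congr 1
      rw [← Fintype.card_subtype]
      have : Fintype.card {y : Fin v → K // y ∈ Submodule.span K {x0}}
          = Fintype.card ↥(Submodule.span K {x0}) := rfl
      rw [this, card_eq_pow_finrank (K := K), finrank_span_singleton hx00, pow_one]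
    calc Q - 1 = _ := hEcard.symm
    _ ≤ _ := Finset.card_le_card hsub
  have hcount := Finset.card_eq_sum_card_fiberwise hmap
  have hsum : (spread (F := F) (K := K) v).card * (Q - 1)
      ≤ ∑ P ∈ spread (F := F) (K := K) v, (T.filter (fun x => g x = P)).card := by
    calc (spread (F := F) (K := K) v).card * (Q - 1)
        = ∑ _P ∈ spread (F := F) (K := K) v, (Q-1) := by rw [Finset.sum_const, smul_eq_mul]
    _ ≤ _ := Finset.sum_le_sum hfiber
  rw [← hcount, hTcard] at hsum
  have hgeom : (Q - 1) * ∑ i ∈ Finset.range v, Q ^ i = Q ^ v - 1 := geom_nat Q (by omega) v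
  have hfin : (spread (F := F) (K := K) v).card * (Q-1)
      ≤ (∑ i ∈ Finset.range v, Q ^ i) * (Q-1) := by
    rw [mul_comm (∑ i ∈ Finset.range v, Q ^ i) (Q-1), hgeom]
    exact hsum
  exact Nat.le_of_mul_le_mul_right hfin (by omega)

end SpreadCount

/-- `C` is a `q`-Turán design `T_q(n,k,r)`: a set of `r`-dimensional subspaces of
`F^n` such that every `k`-dimensional subspace contains at least one of them. -/
def IsTuranDesign (F : Type) [Field F] (n k r : ℕ)
    (C : Finset (Submodule F (Fin n → F))) : Prop :=
  (∀ U ∈ C, finrank F ↥U = r) ∧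
  ∀ W : Submodule F (Fin n → F), finrank F ↥W = k → ∃ U ∈ C, U ≤ W

/-- `𝒯_q(n,k,r)`: the minimum size of a `q`-Turán design `T_q(n,k,r)`. -/
noncomputable def minTuranSize (F : Type) [Field F] (n k r : ℕ) : ℕ :=
  sInf {M | ∃ C : Finset (Submodule F (Fin n → F)), IsTuranDesign F n k r C ∧ C.card = M}


section Main

open Module

/-- **Beutelspacher–Ueberberg.** `𝒯_q(vm+δ, vm-v+1+δ, m) = (q^(vm)-1)/(q^m-1)`
for `v ≥ 2`, `m ≥ 2`, `δ ≥ 0`. -/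
theorem turan_normal_spread (F : Type) [Field F] [Fintype F] (v m δ : ℕ)
    (hv : 2 ≤ v) (hm : 2 ≤ m) :
    (minTuranSize F (v * m + δ) (v * m - v + 1 + δ) m : ℝ) =
      ((Fintype.card F : ℝ) ^ (v * m) - 1) / ((Fintype.card F : ℝ) ^ m - 1) := by
  classical
  set q := Fintype.card F with hq
  have hq2 : 2 ≤ q := Fintype.one_lt_card
  set n := v * m + δ with hn
  set k := v * m - v + 1 + δ with hk
  have hvvm : v ≤ v * m := Nat.le_mul_of_pos_right v (by omega)
  have hkn : k + (v - 1) = n := by omega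
  set N := ∑ i ∈ Finset.range v, q ^ (m * i) with hN
  -- the extension field
  set K := ExtField F m with hK
  haveI : Fintype K := Fintype.ofFinite K
  have hKrank : finrank F K = m := ExtField.finrank_eq F m (by omega)
  have hQ : Fintype.card K = q ^ m := by
    rw [card_eq_pow_finrank (K := F) (V := K), hKrank]
  -- dimension bookkeeping
  have hVm : finrank F (Fin v → K) = v * m := by
    rw [Module.finrank_pi_fintype]
    simp only [hKrank, Finset.sum_const, Finset.card_univ, Fintype.card_fin, smul_eq_mul]
  have hFn : finrank F (Fin n → F) = n := by
    rw [Module.finrank_pi, Fintype.card_fin]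
  have hFd : finrank F (Fin δ → F) = δ := by
    rw [Module.finrank_pi, Fintype.card_fin]
  have hprod : finrank F ((Fin v → K) × (Fin δ → F)) = v * m + δ := by
    rw [Module.finrank_prod, hVm, hFd]
  obtain ⟨e⟩ : Nonempty ((Fin n → F) ≃ₗ[F] ((Fin v → K) × (Fin δ → F))) :=
    FiniteDimensional.nonempty_linearEquiv_of_finrank_eq (by rw [hFn, hprod])
  set ι : (Fin v → K) →ₗ[F] (Fin n → F) :=
    e.symm.toLinearMap ∘ₗ LinearMap.inl F (Fin v → K) (Fin δ → F) with hι
  have hιinj : Function.Injective ι := by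
    rw [hι]
    rw [LinearMap.coe_comp]
    exact e.symm.injective.comp LinearMap.inl_injective
  -- the design
  set C : Finset (Submodule F (Fin n → F)) := (spread (F := F) (K := K) v).image
    (fun P => Submodule.map ι P) with hC
  have hCrank : ∀ U ∈ C, finrank F ↥U = m := by
    intro U hU
    simp only [hC, Finset.mem_image] at hU
    obtain ⟨P, hP, rfl⟩ := hU
    rw [← LinearEquiv.finrank_eq (Submodule.equivMapOfInjective ι hιinj P)]
    rw [spread_finrank v P hP, hKrank]
  have hCcov : ∀ W : Submodule F (Fin n → F), finrank F ↥W = k → ∃ U ∈ C, U ≤ W := by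
    intro W hW
    set W2 := Submodule.map e.toLinearMap W with hW2
    have hW2rank : finrank F ↥W2 = k := by
      rw [hW2, ← hW]
      exact (LinearEquiv.finrank_eq (Submodule.equivMapOfInjective e.toLinearMap e.injective W)).symm
    set inl := LinearMap.inl F (Fin v → K) (Fin δ → F) with hinl
    set U : Submodule F (Fin v → K) := Submodule.comap inl W2 with hU
    have hRrank : finrank F ↥(LinearMap.range inl) = v * m := by
      rw [← LinearEquiv.finrank_eq (LinearEquiv.ofInjective inl LinearMap.inl_injective), hVm]
    have hUrank : finrank F ↥U = finrank F ↥(LinearMap.range inl ⊓ W2) := by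
      rw [LinearEquiv.finrank_eq (Submodule.equivMapOfInjective inl LinearMap.inl_injective U)]
      rw [hU, Submodule.map_comap_eq]
    have hinf := Submodule.finrank_sup_add_finrank_inf_eq (LinearMap.range inl) W2
    have hsup := Submodule.finrank_le (LinearMap.range inl ⊔ W2)
    rw [hprod] at hsup
    rw [hRrank, hW2rank] at hinf
    have hUrank2 : v * finrank F K + 1 ≤ finrank F ↥U + v := by
      rw [hKrank, hUrank]
      omega
    obtain ⟨x, hx0, hxU⟩ := contains_line v (by omega) U hUrank2
    refine ⟨Submodule.map ι ((Submodule.span K {x}).restrictScalars F),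
      Finset.mem_image_of_mem _ (mem_spread v x hx0), ?_⟩
    have h1 : Submodule.map ι ((Submodule.span K {x}).restrictScalars F)
        ≤ Submodule.map ι U := Submodule.map_mono hxU
    have h2 : Submodule.map ι U ≤ W := by
      rw [hι, Submodule.map_comp]
      have h3 : Submodule.map inl U ≤ W2 := by
        rw [hU, Submodule.map_comap_eq]
        exact inf_le_right
      have h4 : Submodule.map e.symm.toLinearMap W2 = W := by
        rw [hW2, ← Submodule.comap_equiv_eq_map_symm, Submodule.comap_map_eq,
          LinearEquiv.ker, sup_bot_eq]
      calc Submodule.map e.symm.toLinearMap (Submodule.map inl U)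
          ≤ Submodule.map e.symm.toLinearMap W2 := Submodule.map_mono h3
      _ = W := h4
    exact le_trans h1 h2
  have hCdesign : IsTuranDesign F n k m C := ⟨hCrank, hCcov⟩
  -- card bounds
  have hCcard_le : C.card ≤ N := by
    calc C.card ≤ (spread (F := F) (K := K) v).card := Finset.card_image_le
    _ ≤ ∑ i ∈ Finset.range v, (Fintype.card K) ^ i := spread_card_le v
    _ = N := by
      rw [hN]
      apply Finset.sum_congr rfl
      intro i _
      rw [hQ, ← pow_mul]
  -- lower bound for any design
  have hdl : ∀ C' : Finset (Submodule F (Fin n → F)), IsTuranDesign F n k m C' →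
      N ≤ C'.card := by
    intro C' hC'
    have hmv1 : m + v ≤ v * m + 1 := by
      obtain ⟨a, rfl⟩ : ∃ a, v = a + 2 := ⟨v - 2, by omega⟩
      obtain ⟨b, rfl⟩ : ∃ b, m = b + 2 := ⟨m - 2, by omega⟩
      have : (a+2) * (b+2) = a*b + 2*a + 2*b + 4 := by ring
      omega
    have h1 := design_lower_bound (F := F) m (by omega) (v-1) (Fin n → F)
      (by rw [hFn]; omega) C' hC'.1
      (by
        intro W hW
        exact hC'.2 W (by rw [hFn] at hW; omega))
    have h2 : v - 1 + 1 = v := by omega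
    rw [h2] at h1
    exact h1
  have hCcard : C.card = N := le_antisymm hCcard_le (hdl C hCdesign)
  -- compute the inf
  have hmem : N ∈ {M | ∃ C : Finset (Submodule F (Fin n → F)),
      IsTuranDesign F n k m C ∧ C.card = M} := ⟨C, hCdesign, hCcard⟩
  have hinf : minTuranSize F n k m = N := by
    rw [minTuranSize]
    apply le_antisymm (Nat.sInf_le hmem)
    obtain ⟨C', hC', hcard'⟩ := Nat.sInf_mem (Set.nonempty_of_mem hmem)
    rw [← hcard']
    exact hdl C' hC'
  rw [hinf]
  -- numerics
  have hq1R : (1:ℝ) < (q:ℝ) := by exact_mod_cast hq2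
  have hne : ((q:ℝ))^m ≠ 1 := ne_of_gt (one_lt_pow₀ hq1R (by omega))
  have hcast : ((N : ℕ) : ℝ) = ∑ i ∈ Finset.range v, ((q:ℝ)^m)^i := by
    rw [hN]
    push_cast
    apply Finset.sum_congr rfl
    intro i _
    rw [← pow_mul]
  rw [hcast, geom_sum_eq hne v, ← pow_mul, mul_comm m v]

end Main
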